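/- For every integer ν ≥ 1, the least positive integer r with the property that r · A_{k,j}(ν) is an integer for all nonnegative integers j ≤ k exists and divides (2ν−1)!/ν!. -/

import Mathlib

/-- `A ν k j` is the rational number `A_{k,j}(ν) = C(k,j)·(k+ν)!·ν! / ((k−j+ν)!·(j+ν)!)`. -/
def A (ν k j : ℕ) : ℚ :=
  (Nat.choose k j : ℚ) * ((k + ν).factorial : ℚ) * (ν.factorial : ℚ) /
    (((k - j + ν).factorial : ℚ) * ((j + ν).factorial : ℚ))

lemma floors (q m j μ : ℕ) :
    (m + (μ+1)) / q + (j + (μ+1)) / q + (m / q + j / q) ≤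
      (μ + (μ+1)) / q + ((m + j) / q + (m + j + (μ+1)) / q) := by
  rcases Nat.eq_zero_or_pos q with hq0 | hq
  · simp [hq0]
  rcases Nat.eq_or_lt_of_le hq with hq1 | hq2
  · rw [← hq1]; simp only [Nat.div_one]; omega
  have hx := Nat.mod_lt m hq
  have hy := Nat.mod_lt j hq
  have hu := Nat.mod_lt μ hq
  have h1 : 1 % q = 1 := Nat.mod_eq_of_lt hq2
  have hz : (μ+1) % q = μ % q + 1 ∨ ((μ+1) % q = 0 ∧ μ % q + 1 = q) := by
    rw [Nat.add_mod, h1]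
    rcases Nat.lt_or_ge (μ % q + 1) q with h | h
    · left; exact Nat.mod_eq_of_lt h
    · right
      have hqq : μ % q + 1 = q := by omega
      rw [hqq]; simp
  have hs : (m+j) % q = m % q + j % q ∨ (m+j) % q + q = m % q + j % q := by
    rw [Nat.add_mod]
    rcases Nat.lt_or_ge (m % q + j % q) q with h | h
    · left; exact Nat.mod_eq_of_lt h
    · right
      rw [Nat.mod_eq_sub_mod h, Nat.mod_eq_of_lt (by omega)]; omega
  have e1 := Nat.add_div hq (a := m) (b := μ+1)
  have e2 := Nat.add_div hq (a := j) (b := μ+1)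
  have e3 := Nat.add_div hq (a := μ) (b := μ+1)
  have e4 := Nat.add_div hq (a := m) (b := j)
  have e5 := Nat.add_div hq (a := m+j) (b := μ+1)
  rw [e1, e2, e3, e5, e4]
  clear e1 e2 e3 e4 e5
  generalize μ / q = w
  generalize (μ+1) / q = w1
  generalize m / q = w2
  generalize j / q = w3
  split_ifs <;> omega

lemma log_lt_of_lt (p n b : ℕ) (hp : 2 ≤ p) (h : n < b) : Nat.log p n < b := by
  rcases Nat.eq_zero_or_pos n with h0 | h0
  · subst h0; simpa using (by omega : 0 < b)
  apply Nat.log_lt_of_lt_pow h0.ne'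
  calc n < 2 ^ n := Nat.lt_two_pow_self
    _ ≤ 2 ^ b := Nat.pow_le_pow_right (by norm_num) h.le
    _ ≤ p ^ b := Nat.pow_le_pow_left hp b

lemma factdvd (μ m j : ℕ) :
    (m+(μ+1)).factorial * (j+(μ+1)).factorial * (m.factorial * j.factorial) ∣
      (μ+(μ+1)).factorial * ((m+j).factorial * (m+j+(μ+1)).factorial) := by
  have hne : ∀ n : ℕ, n.factorial ≠ 0 := fun n => (Nat.factorial_pos n).ne'
  rw [← Nat.factorization_le_iff_dvd
    (by exact Nat.mul_ne_zero (Nat.mul_ne_zero (hne _) (hne _)) (Nat.mul_ne_zero (hne _) (hne _)))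
    (by exact Nat.mul_ne_zero (hne _) (Nat.mul_ne_zero (hne _) (hne _)))]
  rw [Finsupp.le_def]
  intro p
  by_cases hp : p.Prime
  swap
  · simp [Nat.factorization_eq_zero_of_not_prime _ hp]
  haveI : Fact p.Prime := ⟨hp⟩
  rw [Nat.factorization_mul (Nat.mul_ne_zero (hne _) (hne _)) (Nat.mul_ne_zero (hne _) (hne _)),
    Nat.factorization_mul (hne _) (hne _), Nat.factorization_mul (hne _) (hne _),
    Nat.factorization_mul (hne _) (Nat.mul_ne_zero (hne _) (hne _)),
    Nat.factorization_mul (hne _) (hne _)]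
  simp only [Finsupp.coe_add, Pi.add_apply]
  have h2 : 2 ≤ p := hp.two_le
  set b := m + j + 2*μ + 2 with hb
  rw [Nat.factorization_def _ hp, Nat.factorization_def _ hp, Nat.factorization_def _ hp,
    Nat.factorization_def _ hp, Nat.factorization_def _ hp, Nat.factorization_def _ hp,
    Nat.factorization_def _ hp,
    padicValNat_factorial (b := b) (log_lt_of_lt p _ b h2 (by omega)),
    padicValNat_factorial (b := b) (log_lt_of_lt p _ b h2 (by omega)),
    padicValNat_factorial (b := b) (log_lt_of_lt p _ b h2 (by omega)),
    padicValNat_factorial (b := b) (log_lt_of_lt p _ b h2 (by omega)),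
    padicValNat_factorial (b := b) (log_lt_of_lt p _ b h2 (by omega)),
    padicValNat_factorial (b := b) (log_lt_of_lt p _ b h2 (by omega)),
    padicValNat_factorial (b := b) (log_lt_of_lt p _ b h2 (by omega)),
    ← Finset.sum_add_distrib, ← Finset.sum_add_distrib, ← Finset.sum_add_distrib,
    ← Finset.sum_add_distrib, ← Finset.sum_add_distrib]
  exact Finset.sum_le_sum fun i _ => floors (p ^ i) m j μ

lemma keydvd (μ k j : ℕ) (hjk : j ≤ k) :
    (k - j + (μ+1)).factorial * (j+(μ+1)).factorial ∣
      (μ+(μ+1)).factorial * (Nat.choose k j * (k+(μ+1)).factorial) := by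
  have hk : k = (k - j) + j := by omega
  set m := k - j with hm
  have hch : Nat.choose k j * j.factorial * m.factorial = k.factorial :=
    Nat.choose_mul_factorial_mul_factorial hjk
  have hfd := factdvd μ m j
  have hkj : m + j = k := by omega
  rw [hkj] at hfd
  -- hfd : (m+(μ+1))! * (j+(μ+1))! * (m! * j!) ∣ (μ+(μ+1))! * (k! * (k+(μ+1))!)
  have hk2 : k.factorial = Nat.choose k j * (m.factorial * j.factorial) := by
    rw [← hch]; ring
  rw [hk2] at hfd
  have heq : (μ+(μ+1)).factorial * (Nat.choose k j * (m.factorial * j.factorial) * (k+(μ+1)).factorial)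
      = ((μ+(μ+1)).factorial * (Nat.choose k j * (k+(μ+1)).factorial)) * (m.factorial * j.factorial) := by
    ring
  rw [heq] at hfd
  exact (Nat.mul_dvd_mul_iff_right (Nat.mul_pos (Nat.factorial_pos m) (Nat.factorial_pos j))).mp hfd

lemma cast_mul_A (μ k j : ℕ) (hjk : j ≤ k) :
    ∃ z : ℤ, (((μ+(μ+1)).factorial / (μ+1).factorial : ℕ) : ℚ) * A (μ+1) k j = (z : ℚ) := by
  obtain ⟨t, ht⟩ := keydvd μ k j hjk
  refine ⟨(t : ℤ), ?_⟩
  have hMe : ((μ+(μ+1)).factorial / (μ+1).factorial) * (μ+1).factorial = (μ+(μ+1)).factorial :=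
    Nat.div_mul_cancel (Nat.factorial_dvd_factorial (by omega))
  have h1 : (((μ+(μ+1)).factorial / (μ+1).factorial : ℕ) : ℚ) * ((μ+1).factorial : ℚ)
      = ((μ+(μ+1)).factorial : ℚ) := by exact_mod_cast congrArg (Nat.cast (R := ℚ)) hMe
  have h2 : ((μ+(μ+1)).factorial : ℚ) * ((Nat.choose k j : ℚ) * ((k+(μ+1)).factorial : ℚ))
      = ((k - j + (μ+1)).factorial : ℚ) * ((j+(μ+1)).factorial : ℚ) * (t : ℚ) := by
    exact_mod_cast congrArg (Nat.cast (R := ℚ)) ht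
  have hden : ((k - j + (μ+1)).factorial : ℚ) * ((j+(μ+1)).factorial : ℚ) ≠ 0 := by
    have := Nat.factorial_pos (k - j + (μ+1))
    have := Nat.factorial_pos (j+(μ+1))
    positivity
  rw [A, mul_div_assoc', div_eq_iff hden]
  push_cast
  push_cast at h1 h2
  linear_combination ((Nat.choose k j : ℚ) * ((k+(μ+1)).factorial : ℚ)) * h1 + h2

/-- For every `ν ≥ 1`, the least positive integer `r` such that `r·A_{k,j}(ν)` is an
integer for all `j ≤ k` exists and divides `(2ν−1)!/ν!`. -/
theorem stmt1 (ν : ℕ) (hν : 1 ≤ ν) :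
    ∃ r : ℕ,
      IsLeast {r : ℕ | 0 < r ∧ ∀ k j : ℕ, j ≤ k → ∃ z : ℤ, (r : ℚ) * A ν k j = (z : ℚ)} r ∧
      r ∣ (2 * ν - 1).factorial / ν.factorial := by
  obtain ⟨μ, rfl⟩ : ∃ μ, ν = μ + 1 := ⟨ν - 1, by omega⟩
  set S := {r : ℕ | 0 < r ∧ ∀ k j : ℕ, j ≤ k → ∃ z : ℤ, (r : ℚ) * A (μ+1) k j = (z : ℚ)} with hS
  set M := (μ+(μ+1)).factorial / (μ+1).factorial with hM
  have hMpos : 0 < M :=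
    Nat.div_pos (Nat.factorial_le (by omega)) (Nat.factorial_pos _)
  have hMS : M ∈ S := ⟨hMpos, fun k j hjk => cast_mul_A μ k j hjk⟩
  have hne : S.Nonempty := ⟨M, hMS⟩
  have hrS : sInf S ∈ S := Nat.sInf_mem hne
  refine ⟨sInf S, ⟨hrS, fun b hb => Nat.sInf_le hb⟩, ?_⟩
  have h2ν : 2 * (μ+1) - 1 = μ + (μ+1) := by omega
  rw [h2ν]
  -- goal : sInf S ∣ (μ+(μ+1))! / (μ+1)! = M
  have hmod : M % sInf S = 0 := by
    by_contra hmo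
    have hmem : M % sInf S ∈ S := by
      refine ⟨Nat.pos_of_ne_zero hmo, fun k j hjk => ?_⟩
      obtain ⟨zM, hzM⟩ := hMS.2 k j hjk
      obtain ⟨zr, hzr⟩ := hrS.2 k j hjk
      set q : ℕ := M / sInf S with hqdef
      refine ⟨zM - (q : ℤ) * zr, ?_⟩
      have hdm : sInf S * q + M % sInf S = M := Nat.div_add_mod M (sInf S)
      have hcast : ((M % sInf S : ℕ) : ℚ) = (M : ℚ) - (q : ℚ) * ((sInf S : ℕ) : ℚ) := by
        have h3 : ((sInf S * q + M % sInf S : ℕ) : ℚ) = (M : ℚ) := by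
          exact_mod_cast congrArg (Nat.cast (R := ℚ)) hdm
        push_cast at h3
        linarith
      rw [hcast, sub_mul, mul_assoc, hzr, hzM]
      push_cast
      ring
    have hle := Nat.sInf_le hmem
    have hlt : M % sInf S < sInf S := Nat.mod_lt _ hrS.1
    omega
  exact Nat.dvd_of_mod_eq_zero hmod
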